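/- Let n ≥ 3 be odd and let [L_B | 1] be the n×n matrix associated to the cycle C_n. Over Z/nZ, the left kernel {x ∈ (Z/nZ)^n : x·[L_B | 1] ≡ 0 mod n} equals the span of the all-ones vector (1,1,...,1) and the vector (0,1,2,...,n-1). -/

import Mathlib

set_option maxHeartbeats 1000000 in
/-- For odd `n ≥ 3` and the matrix `[L_B | 1]` of the cycle `C_n`, the left
kernel over `ℤ/nℤ` is spanned by `(1,1,…,1)` and `(0,1,2,…,n-1)`. -/
theorem odd_cycle_left_kernel_mod_n {n : ℕ} (hn : 3 ≤ n) (hodd : Odd n)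
    (L : Matrix (Fin n) (Fin n) ℤ)
    (hL : ∀ a b : Fin n, L a b =
      if a = b then 2
      else if b = a + ⟨1, by omega⟩ ∨ a = b + ⟨1, by omega⟩ then -1 else 0)
    (A : Matrix (Fin n) (Fin (n - 1)) ℤ)
    (hA : ∀ i j, A i j = if (i : ℕ) ≤ (j : ℕ) then 1 else 0)
    (M : Matrix (Fin n) (Fin n) ℤ)
    (hM : ∀ i (j : Fin n), M i j =
      if h : (j : ℕ) < n - 1 then (L * A) i ⟨j, h⟩ else 1) :
    {x : Fin n → ZMod n |
        Matrix.vecMul x (M.map (Int.cast : ℤ → ZMod n)) = 0} =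
      ↑(Submodule.span (ZMod n)
        {(fun _ => 1 : Fin n → ZMod n),
         (fun i : Fin n => ((i : ℕ) : ZMod n))}) := by
  have hn0 : 0 < n := by omega
  haveI : NeZero n := ⟨by omega⟩
  have hone : ((1 : Fin n) : ℕ) = 1 := by
    rw [Fin.val_one', Nat.mod_eq_of_lt (by omega)]
  have e1 : ∀ (h : 1 < n), (⟨1, h⟩ : Fin n) = 1 := fun h => Fin.ext (by rw [hone])
  have hL' : ∀ a b : Fin n, L a b =
      if a = b then 2 else if b = a + 1 ∨ a = b + 1 then -1 else 0 := by
    intro a b; rw [hL a b, e1]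
  -- distinctness facts
  have h10 : (1 : Fin n) ≠ 0 := by
    intro h; have := congrArg Fin.val h; simp [hone] at this; omega
  have h20 : (1 : Fin n) + 1 ≠ 0 := by
    intro h; have := congrArg Fin.val h
    rw [Fin.val_add, hone] at this
    rw [Nat.mod_eq_of_lt (by omega)] at this
    simp at this
  -- the three-term formula
  have key : ∀ (w : Fin n → ZMod n) (k : Fin n),
      (∑ i, w i * ((L i k : ℤ) : ZMod n)) = 2 * w k - w (k - 1) - w (k + 1) := by
    intro w k
    have hab : k - 1 ≠ k := fun h => h10 (sub_eq_self.mp h)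
    have hcb : k + 1 ≠ k := fun h => h10 (by
      have := left_eq_add.mp h.symm; exact this)
    have hac : k - 1 ≠ k + 1 := by
      intro h
      have h2 : k = k + (1 + 1) := by
        have h3 := sub_eq_iff_eq_add.mp h
        rw [add_assoc] at h3
        exact h3
      exact h20 (left_eq_add.mp h2)
    have hset : ∀ i : Fin n, i ∉ ({k - 1, k + 1, k} : Finset (Fin n)) →
        w i * ((L i k : ℤ) : ZMod n) = 0 := by
      intro i hi
      simp only [Finset.mem_insert, Finset.mem_singleton, not_or] at hi
      obtain ⟨hi1, hi2, hi3⟩ := hi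
      rw [hL' i k, if_neg hi3, if_neg, Int.cast_zero, mul_zero]
      rintro (h | h)
      · exact hi1 (eq_sub_of_add_eq h.symm)
      · exact hi2 h
    rw [← Finset.sum_subset (Finset.subset_univ ({k - 1, k + 1, k} : Finset (Fin n)))
      (fun i _ hi => hset i hi)]
    rw [Finset.sum_insert (by simp [hac, hab]), Finset.sum_insert (by simp [hcb]),
      Finset.sum_singleton]
    rw [hL' (k - 1) k, hL' (k + 1) k, hL' k k]
    rw [if_neg hab, if_pos (Or.inl (sub_add_cancel k 1).symm),
      if_neg hcb, if_pos (Or.inr rfl), if_pos rfl]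
    push_cast
    ring
  -- column formula
  have colF : ∀ (w : Fin n → ZMod n) (j : Fin n),
      Matrix.vecMul w (M.map (Int.cast : ℤ → ZMod n)) j =
        if hj : (j : ℕ) < n - 1 then
          ∑ k ∈ Finset.univ.filter (fun k : Fin n => (k : ℕ) ≤ (j : ℕ)),
            (∑ i, w i * ((L i k : ℤ) : ZMod n))
        else ∑ i, w i := by
    intro w j
    by_cases hj : (j : ℕ) < n - 1
    · rw [dif_pos hj]
      simp only [Matrix.vecMul, dotProduct, Matrix.map_apply]
      calc ∑ i, w i * ((M i j : ℤ) : ZMod n)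
          = ∑ i, ∑ k, w i * (((L i k : ℤ) : ZMod n) * ((A k ⟨j, hj⟩ : ℤ) : ZMod n)) := by
            refine Finset.sum_congr rfl fun i _ => ?_
            rw [hM i j, dif_pos hj, Matrix.mul_apply]
            push_cast
            rw [Finset.mul_sum]
        _ = ∑ k, (∑ i, w i * ((L i k : ℤ) : ZMod n)) * ((A k ⟨j, hj⟩ : ℤ) : ZMod n) := by
            rw [Finset.sum_comm]
            refine Finset.sum_congr rfl fun k _ => ?_
            rw [Finset.sum_mul]
            exact Finset.sum_congr rfl fun i _ => (mul_assoc _ _ _).symm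
        _ = ∑ k ∈ Finset.univ.filter (fun k : Fin n => (k : ℕ) ≤ (j : ℕ)),
              (∑ i, w i * ((L i k : ℤ) : ZMod n)) := by
            rw [Finset.sum_filter]
            refine Finset.sum_congr rfl fun k _ => ?_
            rw [hA k ⟨j, hj⟩]
            by_cases hk : (k : ℕ) ≤ (j : ℕ) <;> simp [hk]
    · rw [dif_neg hj]
      simp only [Matrix.vecMul, dotProduct, Matrix.map_apply]
      refine Finset.sum_congr rfl fun i _ => ?_
      rw [hM i j, dif_neg hj, Int.cast_one, mul_one]
  -- Fin arithmetic helpers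
  have f0 : ∀ (h : 0 < n), (⟨0, h⟩ : Fin n) = 0 := fun h => Fin.ext (by simp)
  have fin_add : ∀ (m : ℕ) (hm : m < n) (h : m + 1 < n),
      (⟨m, hm⟩ : Fin n) + 1 = ⟨m + 1, h⟩ := by
    intro m hm h
    apply Fin.ext
    rw [Fin.val_add, hone]
    simp [Nat.mod_eq_of_lt h]
  have fin_sub : ∀ (m : ℕ) (h : m + 1 < n), (⟨m + 1, h⟩ : Fin n) - 1 = ⟨m, by omega⟩ :=
    fun m h => sub_eq_of_eq_add ((fin_add m (by omega) h).symm)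
  have lst_add : (⟨n - 1, by omega⟩ : Fin n) + 1 = (0 : Fin n) := by
    apply Fin.ext
    rw [Fin.val_add, hone]
    simp [Nat.sub_add_cancel (by omega : 1 ≤ n)]
  have fzero_sub : (0 : Fin n) - 1 = (⟨n - 1, by omega⟩ : Fin n) :=
    sub_eq_of_eq_add lst_add.symm
  -- cast helpers
  have castadd : ∀ k : Fin n, (((k + 1 : Fin n) : ℕ) : ZMod n) = ((k : ℕ) : ZMod n) + 1 := by
    intro k
    rw [Fin.val_add, hone, ZMod.natCast_mod]
    push_cast; ring
  have castsub : ∀ k : Fin n, (((k - 1 : Fin n) : ℕ) : ZMod n) = ((k : ℕ) : ZMod n) - 1 := by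
    intro k
    rw [Fin.sub_def]
    simp only []
    rw [ZMod.natCast_mod]
    rw [hone]
    push_cast [Nat.cast_sub (by omega : 1 ≤ n)]
    rw [ZMod.natCast_self]
    ring
  ext x
  simp only [Set.mem_setOf_eq, SetLike.mem_coe]
  constructor
  · intro hx
    have hS : ∀ m : ℕ, m < n - 1 →
        ∑ k ∈ Finset.univ.filter (fun k : Fin n => (k : ℕ) ≤ m),
          (∑ i, x i * ((L i k : ℤ) : ZMod n)) = 0 := by
      intro m hm
      have hmn : m < n := by omega
      have h := congrFun hx ⟨m, hmn⟩
      rw [colF x ⟨m, hmn⟩, dif_pos hm] at h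
      simpa using h
    have hy : ∀ m : ℕ, ∀ (hm : m < n - 1),
        (∑ i, x i * ((L i (⟨m, by omega⟩ : Fin n) : ℤ) : ZMod n)) = 0 := by
      intro m hm
      cases m with
      | zero =>
        have h0 := hS 0 hm
        have hfe : Finset.univ.filter (fun k : Fin n => (k : ℕ) ≤ 0) = {(0 : Fin n)} := by
          ext k
          simp only [Finset.mem_filter, Finset.mem_univ, true_and, Finset.mem_singleton,
            Fin.ext_iff, Fin.val_zero]
          omega
        rw [hfe, Finset.sum_singleton] at h0
        rw [f0]
        exact h0
      | succ m =>
        have h1 := hS (m + 1) hm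
        have h0 := hS m (by omega)
        have hmn : m + 1 < n := by omega
        have hins : Finset.univ.filter (fun k : Fin n => (k : ℕ) ≤ m + 1) =
            insert (⟨m + 1, hmn⟩ : Fin n)
              (Finset.univ.filter (fun k : Fin n => (k : ℕ) ≤ m)) := by
          ext k
          simp only [Finset.mem_filter, Finset.mem_univ, true_and, Finset.mem_insert,
            Fin.ext_iff]
          omega
        rw [hins, Finset.sum_insert (by simp), h0, add_zero] at h1
        exact h1
    have hlast : n - 1 < n := by omega
    have prog : ∀ m : ℕ, ∀ (hm : m < n), x ⟨m, hm⟩ = x 0 + (m : ZMod n) * (x 0 - x (⟨n - 1, hlast⟩ : Fin n)) := by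
      intro m
      induction m using Nat.twoStepInduction with
      | zero =>
        intro hm
        rw [f0 hm]
        simp
      | one =>
        intro hm
        have h0 : 2 * x (⟨0, hn0⟩ : Fin n) - x ((⟨0, hn0⟩ : Fin n) - 1)
            - x ((⟨0, hn0⟩ : Fin n) + 1) = 0 :=
          (key x ⟨0, hn0⟩).symm.trans (hy 0 (by omega))
        rw [f0 hn0, fzero_sub, zero_add] at h0
        have he1 : (⟨1, hm⟩ : Fin n) = 1 := e1 hm
        rw [he1]
        push_cast
        linear_combination -h0
      | more k ih0 ih1 =>
        intro hm
        have hk1 : k + 1 < n - 1 := by omega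
        have hkn : k + 1 < n := by omega
        have h : 2 * x (⟨k + 1, hkn⟩ : Fin n) - x ((⟨k + 1, hkn⟩ : Fin n) - 1)
            - x ((⟨k + 1, hkn⟩ : Fin n) + 1) = 0 :=
          (key x ⟨k + 1, hkn⟩).symm.trans (hy (k + 1) hk1)
        rw [fin_sub k hkn, fin_add (k + 1) hkn hm] at h
        have i1 := ih1 hkn
        have i0 := ih0 (by omega)
        push_cast at i1 i0 ⊢
        linear_combination 2 * i1 - i0 - h
    rw [Submodule.mem_span_pair]
    refine ⟨x 0, x 0 - x (⟨n - 1, hlast⟩ : Fin n), ?_⟩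
    funext i
    have hp := prog i.val i.isLt
    rw [Fin.eta] at hp
    simp only [Pi.add_apply, Pi.smul_apply, smul_eq_mul]
    rw [hp]
    ring
  · intro hx
    rw [Submodule.mem_span_pair] at hx
    obtain ⟨a, b, rfl⟩ := hx
    have hw : ∀ k : Fin n,
        (a • (fun _ => 1 : Fin n → ZMod n) + b • (fun i : Fin n => ((i : ℕ) : ZMod n))) k
          = a + b * ((k : ℕ) : ZMod n) := by
      intro k
      simp [mul_one]
    funext j
    rw [colF, Pi.zero_apply]
    split
    · refine Finset.sum_eq_zero fun k _ => ?_
      rw [key]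
      rw [hw k, hw (k - 1), hw (k + 1), castadd, castsub]
      ring
    · obtain ⟨t, ht⟩ := hodd
      have hsum1 : (∑ i : Fin n, (1 : ZMod n)) = 0 := by
        simp [Finset.card_univ]
      have hsum2 : (∑ i : Fin n, ((i : ℕ) : ZMod n)) = 0 := by
        rw [← Nat.cast_sum]
        have : (∑ i : Fin n, (i : ℕ)) = ∑ i ∈ Finset.range n, i :=
          Fin.sum_univ_eq_sum_range (fun m => m) n
        rw [this, Finset.sum_range_id]
        have hdiv : n * (n - 1) / 2 = n * t := by
          subst ht
          have h2 : 2 * t + 1 - 1 = 2 * t := by omega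
          rw [h2, show (2 * t + 1) * (2 * t) = (2 * t + 1) * t * 2 by ring,
            Nat.mul_div_cancel _ (by norm_num)]
        rw [hdiv]
        push_cast
        rw [ZMod.natCast_self]
        ring
      calc (∑ i, (a • (fun _ => 1 : Fin n → ZMod n)
              + b • (fun i : Fin n => ((i : ℕ) : ZMod n))) i)
          = ∑ i : Fin n, (a * 1 + b * ((i : ℕ) : ZMod n)) := by
            refine Finset.sum_congr rfl fun i _ => ?_
            rw [hw i, mul_one]
        _ = a * (∑ i : Fin n, (1 : ZMod n)) + b * (∑ i : Fin n, ((i : ℕ) : ZMod n)) := by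
            rw [Finset.sum_add_distrib, Finset.mul_sum, Finset.mul_sum]
        _ = 0 := by rw [hsum1, hsum2]; ring
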